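/- Expressive completeness of COD over generalized causal teams: a nonempty class K of generalized causal teams over a finite signature σ is definable by a COD-formula (equivalently, by a CO_⤘-formula) if and only if K is causally downward closed and closed under equivalence ≈ (equivalently, closed under the relation ≽). -/

import Mathlib

namespace CausalTeams

attribute [local instance] Classical.propDecidable

/-- A system of functions over a signature: each endogenous variable `V ∈ En` has a set
of parents `PA V` (not containing `V`) and a function computing its value, which depends
only on the values of its parents. -/
structure FuncSystem (Var : Type) (Val : Var → Type) : Type where
  En : Set Var
  PA : Var → Set Var
  pa_ne : ∀ V, V ∉ PA V
  fn : ∀ V, (∀ W, Val W) → Val V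
  dep_only : ∀ V (s t : ∀ W, Val W), (∀ W ∈ PA V, s W = t W) → fn V s = fn V t

variable {Var : Type} {Val : Var → Type}

/-- Assignments of values to the variables. -/
abbrev Assign (Var : Type) (Val : Var → Type) : Type := ∀ V, Val V

/-- An assignment is compatible with a system of functions if each endogenous variable's
value is the one generated by its function. -/
def Compat (s : Assign Var Val) (F : FuncSystem Var Val) : Prop :=
  ∀ V ∈ F.En, s V = F.fn V s

/-- The endogenous variables whose generating function is constant. -/
def Cn (F : FuncSystem Var Val) : Set Var :=
  {V | V ∈ F.En ∧ ∀ s t : Assign Var Val, F.fn V s = F.fn V t}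

/-- The functions for `V` in `F` and `G` are equivalent up to dummy arguments: they agree
whenever their arguments agree on the common parents of `V`. -/
def fnEquiv (F G : FuncSystem Var Val) (V : Var) : Prop :=
  ∀ s t : Assign Var Val,
    (∀ W, W ∈ F.PA V → W ∈ G.PA V → s W = t W) → F.fn V s = G.fn V t

/-- Equivalence of systems of functions up to dummy arguments. -/
def sysEquiv (F G : FuncSystem Var Val) : Prop :=
  F.En \ Cn F = G.En \ Cn G ∧ ∀ V ∈ F.En \ Cn F, fnEquiv F G V

/-- The edge relation of the causal graph of `F`. -/
def Edge (F : FuncSystem Var Val) (W V : Var) : Prop := V ∈ F.En ∧ W ∈ F.PA V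

/-- `F` is recursive: its causal graph is acyclic. -/
def RecursiveSys (F : FuncSystem Var Val) : Prop :=
  ∀ V, ¬ Relation.TransGen (Edge F) V V

/-- The system of functions resulting from the intervention `do(X = x)`: the variables of
`X` are made exogenous; parents and functions of the remaining endogenous variables are kept. -/
def restrictSys (F : FuncSystem Var Val) (X : Finset Var) : FuncSystem Var Val where
  En := F.En \ ↑X
  PA := F.PA
  pa_ne := F.pa_ne
  fn := F.fn
  dep_only := F.dep_only

section InterveneAssign
variable [DecidableEq Var] [Fintype Var]

/-- One step of recomputation after the intervention `do(X = x)`. -/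
noncomputable def stepFn (F : FuncSystem Var Val) (X : Finset Var) (x : Assign Var Val)
    (s : Assign Var Val) : Assign Var Val :=
  fun V => if V ∈ X then x V else if V ∈ F.En then F.fn V s else s V

/-- The result of the intervention `do(X = x)` on the assignment `s`
(for recursive systems, iterating the recomputation step sufficiently many times
reaches the fixed point). -/
noncomputable def interveneAssign (F : FuncSystem Var Val) (X : Finset Var) (x : Assign Var Val)
    (s : Assign Var Val) : Assign Var Val :=
  (stepFn F X x)^[Fintype.card Var + 1] s

end InterveneAssign

/-- Formulas: equality atoms `V = v`, dependence atoms `=(Xs; Y)`, negation, conjunction,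
tensor disjunction, global disjunction, and interventionist counterfactuals
`X = x □→ φ` (the antecedent is a finite set of variables together with the values
imposed on them, read off from an assignment; such antecedents are always consistent). -/
inductive Formula (Var : Type) (Val : Var → Type) : Type where
  | eq : (V : Var) → Val V → Formula Var Val
  | dep : List Var → Var → Formula Var Val
  | neg : Formula Var Val → Formula Var Val
  | and : Formula Var Val → Formula Var Val → Formula Var Val
  | or : Formula Var Val → Formula Var Val → Formula Var Val
  | gor : Formula Var Val → Formula Var Val → Formula Var Val
  | cf : Finset Var → Assign Var Val → Formula Var Val → Formula Var Val

/-- CO-formulas: no dependence atoms, no global disjunction. -/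
def IsCO : Formula Var Val → Prop
  | .eq _ _ => True
  | .dep _ _ => False
  | .neg φ => IsCO φ
  | .and φ ψ => IsCO φ ∧ IsCO ψ
  | .or φ ψ => IsCO φ ∧ IsCO ψ
  | .gor _ _ => False
  | .cf _ _ φ => IsCO φ

/-- COD-formulas: CO plus dependence atoms; negation applies only to CO-formulas. -/
def IsCOD : Formula Var Val → Prop
  | .eq _ _ => True
  | .dep _ _ => True
  | .neg φ => IsCO φ
  | .and φ ψ => IsCOD φ ∧ IsCOD ψ
  | .or φ ψ => IsCOD φ ∧ IsCOD ψ
  | .gor _ _ => False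
  | .cf _ _ φ => IsCOD φ

/-- CO_⤘-formulas: CO plus global disjunction; negation applies only to CO-formulas. -/
def IsCOglobal : Formula Var Val → Prop
  | .eq _ _ => True
  | .dep _ _ => False
  | .neg φ => IsCO φ
  | .and φ ψ => IsCOglobal φ ∧ IsCOglobal ψ
  | .or φ ψ => IsCOglobal φ ∧ IsCOglobal ψ
  | .gor φ ψ => IsCOglobal φ ∧ IsCOglobal ψ
  | .cf _ _ φ => IsCOglobal φ

/-- Counterfactual-free formulas: no occurrence of `□→`. -/
def CFFree : Formula Var Val → Prop
  | .eq _ _ => True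
  | .dep _ _ => True
  | .neg φ => CFFree φ
  | .and φ ψ => CFFree φ ∧ CFFree ψ
  | .or φ ψ => CFFree φ ∧ CFFree ψ
  | .gor φ ψ => CFFree φ ∧ CFFree ψ
  | .cf _ _ _ => False

section Semantics
variable [DecidableEq Var] [Fintype Var]

/-- Causal team semantics: satisfaction of a formula by a team of assignments together
with a system of functions. -/
noncomputable def csat : FuncSystem Var Val → Set (Assign Var Val) → Formula Var Val → Prop
  | _, T, .eq V v => ∀ s ∈ T, s V = v
  | _, T, .dep Xs Y => ∀ s ∈ T, ∀ t ∈ T, (∀ W ∈ Xs, s W = t W) → s Y = t Y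
  | F, T, .neg φ => ∀ s ∈ T, ¬ csat F {s} φ
  | F, T, .and φ ψ => csat F T φ ∧ csat F T ψ
  | F, T, .or φ ψ => ∃ T₁ T₂, T₁ ∪ T₂ = T ∧ csat F T₁ φ ∧ csat F T₂ ψ
  | F, T, .gor φ ψ => csat F T φ ∨ csat F T ψ
  | F, T, .cf X x φ => csat (restrictSys F X) (interveneAssign F X x '' T) φ

end Semantics

/-- Generalized causal teams: sets of pairs of an assignment and a system of functions. -/
abbrev GCT (Var : Type) (Val : Var → Type) : Type :=
  Set (Assign Var Val × FuncSystem Var Val)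

/-- The team component of a generalized causal team. -/
def teamOf (T : GCT Var Val) : Set (Assign Var Val) := Prod.fst '' T

/-- A genuine (recursive) generalized causal team: all pairs are compatible and all
function components are recursive. -/
def IsGCT (T : GCT Var Val) : Prop := ∀ p ∈ T, Compat p.1 p.2 ∧ RecursiveSys p.2

section GSemantics
variable [DecidableEq Var] [Fintype Var]

/-- Pointwise intervention on a generalized causal team. -/
noncomputable def gIntervene (T : GCT Var Val) (X : Finset Var) (x : Assign Var Val) : GCT Var Val :=
  (fun p => (interveneAssign p.2 X x p.1, restrictSys p.2 X)) '' T

/-- Generalized causal team semantics. -/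
noncomputable def gsat : GCT Var Val → Formula Var Val → Prop
  | T, .eq V v => ∀ p ∈ T, p.1 V = v
  | T, .dep Xs Y => ∀ p ∈ T, ∀ q ∈ T, (∀ W ∈ Xs, p.1 W = q.1 W) → p.1 Y = q.1 Y
  | T, .neg φ => ∀ p ∈ T, ¬ gsat {p} φ
  | T, .and φ ψ => gsat T φ ∧ gsat T ψ
  | T, .or φ ψ => ∃ T₁ T₂, T₁ ∪ T₂ = T ∧ gsat T₁ φ ∧ gsat T₂ ψ
  | T, .gor φ ψ => gsat T φ ∨ gsat T ψ
  | T, .cf X x φ => gsat (gIntervene T X x) φ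

end GSemantics

/-- Equivalence of generalized causal teams: for each system of functions `F`, the
assignments occurring together with a function component `∼`-similar to `F` are the same. -/
def gctEquiv (S T : GCT Var Val) : Prop :=
  ∀ F : FuncSystem Var Val,
    {s | ∃ G, (s, G) ∈ S ∧ sysEquiv G F} = {s | ∃ G, (s, G) ∈ T ∧ sysEquiv G F}

/-- `S ≼ T` iff `S ≈ R ⊆ T` for some `R`. -/
def sle (S T : GCT Var Val) : Prop := ∃ R : GCT Var Val, gctEquiv S R ∧ R ⊆ T

/-- The generalized causal team generated by a causal team. -/
def toGCT (team : Set (Assign Var Val)) (F : FuncSystem Var Val) : GCT Var Val :=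
  (fun s => (s, F)) '' team

/-- Equivalence of elements of generalized causal teams: same assignment and
`∼`-similar function components. -/
def pairEquiv (p q : Assign Var Val × FuncSystem Var Val) : Prop :=
  p.1 = q.1 ∧ sysEquiv p.2 q.2

/-- The quotient `T/≈` has at most `k` elements: `T` is covered by `k` representatives. -/
def quotCardLE (T : GCT Var Val) (k : ℕ) : Prop :=
  ∃ R : Finset (Assign Var Val × FuncSystem Var Val),
    R.card ≤ k ∧ ∀ p ∈ T, ∃ q ∈ R, pairEquiv p q

section Entailment
variable [DecidableEq Var] [Fintype Var]

/-- Entailment over (recursive) generalized causal teams. -/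
def gEntails (Δ : Set (Formula Var Val)) (α : Formula Var Val) : Prop :=
  ∀ T : GCT Var Val, IsGCT T → (∀ γ ∈ Δ, gsat T γ) → gsat T α

/-- Entailment over (recursive) causal teams. -/
def cEntails (Δ : Set (Formula Var Val)) (α : Formula Var Val) : Prop :=
  ∀ (F : FuncSystem Var Val) (team : Set (Assign Var Val)),
    RecursiveSys F → (∀ s ∈ team, Compat s F) →
    (∀ γ ∈ Δ, csat F team γ) → csat F team α

/-- Causal incompatibility of two formulas. -/
def Incompatible (φ ψ : Formula Var Val) : Prop :=
  ∀ (F G : FuncSystem Var Val) (S T : Set (Assign Var Val)),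
    S.Nonempty → T.Nonempty → RecursiveSys F → RecursiveSys G →
    (∀ s ∈ S, Compat s F) → (∀ t ∈ T, Compat t G) →
    csat F S φ → csat G T ψ → ¬ sysEquiv F G

end Entailment

section FormulaHelpers
variable [DecidableEq Var] [Fintype Var] [Nonempty Var]
  [∀ V, Fintype (Val V)] [∀ V, Nonempty (Val V)]

/-- The falsum formula `⊥ := V = v ∧ V ≠ v`. -/
noncomputable def falsum : Formula Var Val :=
  let V := Classical.arbitrary Var
  Formula.and (Formula.eq V (Classical.arbitrary (Val V)))
    (Formula.neg (Formula.eq V (Classical.arbitrary (Val V))))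

/-- Finite conjunction (the empty conjunction is `¬⊥`). -/
noncomputable def bigAnd : List (Formula Var Val) → Formula Var Val
  | [] => Formula.neg falsum
  | [φ] => φ
  | φ :: l => Formula.and φ (bigAnd l)

/-- Finite tensor disjunction (the empty disjunction is `⊥`). -/
noncomputable def bigOr : List (Formula Var Val) → Formula Var Val
  | [] => falsum
  | [φ] => φ
  | φ :: l => Formula.or φ (bigOr l)

/-- Finite global disjunction (the empty disjunction is `⊥`). -/
noncomputable def bigGor : List (Formula Var Val) → Formula Var Val
  | [] => falsum
  | [φ] => φ
  | φ :: l => Formula.gor φ (bigGor l)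

/-- The conjunction `⋀_{V ∈ Dom} V = s(V)` describing the assignment `s`. -/
noncomputable def eqConj (s : Assign Var Val) : Formula Var Val :=
  bigAnd ((Finset.univ : Finset Var).toList.map fun V => Formula.eq V (s V))

/-- `Θ^A := ⋁_{s ∈ A} ⋀_{V ∈ Dom} V = s(V)`. -/
noncomputable def Theta (A : Finset (Assign Var Val)) : Formula Var Val :=
  bigOr (A.toList.map eqConj)

/-- The constancy atom `=(V)`. -/
def conAtom (V : Var) : Formula Var Val := Formula.dep [] V

/-- `μ := ⋀_{V ∈ Dom} ⋀_{w} (W_V = w □→ =(V))` where `W_V = Dom \ {V}`. -/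
noncomputable def muForm : Formula Var Val :=
  bigAnd ((Finset.univ : Finset Var).toList.map fun V =>
    bigAnd (((Finset.univ : Finset (Assign Var Val))).toList.map fun w =>
      Formula.cf ((Finset.univ : Finset Var).erase V) w (conAtom V)))

/-- `χ := μ ∧ ⋀_{V ∈ Dom} =(V)`. -/
noncomputable def chiForm : Formula Var Val :=
  Formula.and muForm (bigAnd ((Finset.univ : Finset Var).toList.map conAtom))

/-- `χ_k`: the `k`-fold tensor disjunction of `χ` (with `χ_0 := ⊥`). -/
noncomputable def chiK : ℕ → Formula Var Val
  | 0 => falsum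
  | 1 => chiForm
  | n + 2 => Formula.or chiForm (chiK (n + 1))

end FormulaHelpers


/-! ### Auxiliary development -/

section Aux
variable {Var : Type} {Val : Var → Type}

lemma fnEquiv_refl (F : FuncSystem Var Val) (V : Var) : fnEquiv F F V :=
  fun s t h => F.dep_only V s t (fun W hW => h W hW hW)

lemma sysEquiv_refl (F : FuncSystem Var Val) : sysEquiv F F :=
  ⟨rfl, fun V _ => fnEquiv_refl F V⟩

lemma sysEquiv_symm {F G : FuncSystem Var Val} (h : sysEquiv F G) : sysEquiv G F := by
  refine ⟨h.1.symm, fun V hV => ?_⟩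
  intro s t hst
  have hVF : V ∈ F.En \ Cn F := by rw [h.1]; exact hV
  exact (h.2 V hVF t s (fun W h1 h2 => (hst W h2 h1).symm)).symm

lemma sysEquiv_trans {F G H : FuncSystem Var Val} (h1 : sysEquiv F G) (h2 : sysEquiv G H) :
    sysEquiv F H := by
  classical
  refine ⟨h1.1.trans h2.1, fun V hV s t hst => ?_⟩
  set u : Assign Var Val := fun W => if W ∈ F.PA V then s W else t W with hu
  have e1 : F.fn V s = G.fn V u := h1.2 V hV s u (fun W hF _ => by simp [hu, hF])
  have e2 : G.fn V u = H.fn V t := by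
    refine h2.2 V (by rw [← h1.1]; exact hV) u t (fun W hG hH => ?_)
    by_cases hF : W ∈ F.PA V
    · simpa [hu, hF] using hst W hF hH
    · simp [hu, hF]
  exact e1.trans e2

lemma pairEquiv_refl (p : Assign Var Val × FuncSystem Var Val) : pairEquiv p p :=
  ⟨rfl, sysEquiv_refl _⟩

lemma pairEquiv_symm {p q : Assign Var Val × FuncSystem Var Val}
    (h : pairEquiv p q) : pairEquiv q p := ⟨h.1.symm, sysEquiv_symm h.2⟩

lemma pairEquiv_trans {p q r : Assign Var Val × FuncSystem Var Val}
    (h1 : pairEquiv p q) (h2 : pairEquiv q r) : pairEquiv p r :=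
  ⟨h1.1.trans h2.1, sysEquiv_trans h1.2 h2.2⟩

instance pairSetoid : Setoid (Assign Var Val × FuncSystem Var Val) :=
  ⟨pairEquiv, ⟨pairEquiv_refl, pairEquiv_symm, pairEquiv_trans⟩⟩

lemma pairSetoid_r {p q : Assign Var Val × FuncSystem Var Val} :
    (pairSetoid.r p q) ↔ pairEquiv p q := Iff.rfl

instance finFuncSystem [Finite Var] [∀ V, Finite (Val V)] : Finite (FuncSystem Var Val) := by
  let f : FuncSystem Var Val → (Set Var) × (Var → Set Var) × (∀ V, (∀ W, Val W) → Val V) :=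
    fun F => (F.En, F.PA, F.fn)
  have hf : Function.Injective f := by
    rintro ⟨E1, P1, h1, f1, d1⟩ ⟨E2, P2, h2, f2, d2⟩ h
    simp only [f, Prod.mk.injEq] at h
    obtain ⟨hE, hP, hfn⟩ := h
    subst hE; subst hP; subst hfn; rfl
  exact Finite.of_injective f hf

end Aux

section Interv
variable {Var : Type} {Val : Var → Type} [DecidableEq Var] [Fintype Var]

lemma iterate_mem_X {F : FuncSystem Var Val} {X : Finset Var} {x : Assign Var Val}
    (s : Assign Var Val) {W : Var} (hW : W ∈ X) {n : ℕ} (hn : 1 ≤ n) :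
    (stepFn F X x)^[n] s W = x W := by
  obtain ⟨m, rfl⟩ : ∃ m, n = m + 1 := ⟨n - 1, by omega⟩
  rw [Function.iterate_succ_apply']
  simp [stepFn, hW]

lemma iterate_inert {F : FuncSystem Var Val} {X : Finset Var} {x : Assign Var Val}
    {V : Var} (hX : V ∉ X) (hE : V ∉ F.En) (s : Assign Var Val) (n : ℕ) :
    (stepFn F X x)^[n] s V = s V := by
  induction n with
  | zero => rfl
  | succ n ih => rw [Function.iterate_succ_apply']; simp [stepFn, hX, hE, ih]

noncomputable def rankOf (F : FuncSystem Var Val) (V : Var) : ℕ :=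
  {W | Relation.TransGen (Edge F) W V}.ncard

lemma rank_lt {F : FuncSystem Var Val} (hrec : RecursiveSys F) {W V : Var}
    (h : Edge F W V) : rankOf F W < rankOf F V := by
  apply Set.ncard_lt_ncard
  · constructor
    · intro a ha
      exact Relation.TransGen.tail ha h
    · intro hsub
      exact hrec W (hsub (Relation.TransGen.single h))
  · exact Set.toFinite _

lemma rank_le_card (F : FuncSystem Var Val) (V : Var) : rankOf F V ≤ Fintype.card Var := by
  have := Set.ncard_le_ncard (Set.subset_univ {W | Relation.TransGen (Edge F) W V})
    Set.finite_univ
  rwa [Set.ncard_univ, Nat.card_eq_fintype_card] at this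

lemma iterate_stab {F : FuncSystem Var Val} (hrec : RecursiveSys F)
    (X : Finset Var) (x s : Assign Var Val) :
    ∀ n V, rankOf F V + 1 ≤ n → (stepFn F X x)^[n] s V = (stepFn F X x)^[n+1] s V := by
  intro n
  induction n with
  | zero => intro V h; omega
  | succ n ih =>
    intro V h
    by_cases hX : V ∈ X
    · rw [iterate_mem_X s hX (by omega), iterate_mem_X s hX (by omega)]
    by_cases hE : V ∈ F.En
    · rw [show n + 1 + 1 = (n+1) + 1 from rfl, Function.iterate_succ_apply',
        Function.iterate_succ_apply']
      simp only [stepFn, if_neg hX, if_pos hE]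
      apply F.dep_only
      intro W hW
      have hlt : rankOf F W < rankOf F V := rank_lt hrec ⟨hE, hW⟩
      exact ih W (by omega)
    · rw [iterate_inert hX hE, iterate_inert hX hE]

lemma interveneAssign_fix {F : FuncSystem Var Val} (hrec : RecursiveSys F)
    (X : Finset Var) (x s : Assign Var Val) :
    stepFn F X x (interveneAssign F X x s) = interveneAssign F X x s := by
  have h : (stepFn F X x)^[Fintype.card Var + 1] s
      = (stepFn F X x)^[Fintype.card Var + 1 + 1] s := by
    funext V
    exact iterate_stab hrec X x s _ V (by have := rank_le_card F V; omega)
  unfold interveneAssign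
  conv_lhs => rw [← Function.iterate_succ_apply' (stepFn F X x) (Fintype.card Var + 1) s]
  exact h.symm

lemma interveneAssign_compat {F : FuncSystem Var Val} (hrec : RecursiveSys F)
    (X : Finset Var) (x s : Assign Var Val) :
    Compat (interveneAssign F X x s) (restrictSys F X) := by
  intro V hV
  have h1 : V ∈ F.En := hV.1
  have h2 : V ∉ X := by
    intro hc; exact hV.2 (by simpa using hc)
  have hfix := congrFun (interveneAssign_fix hrec X x s) V
  simp only [stepFn, if_neg h2, if_pos h1] at hfix
  exact hfix.symm

lemma restrict_recursive {F : FuncSystem Var Val} (h : RecursiveSys F) (X : Finset Var) :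
    RecursiveSys (restrictSys F X) := by
  intro V hV
  apply h V
  exact Relation.TransGen.mono (p := Edge F) (fun a b (hab : Edge (restrictSys F X) a b) => (⟨hab.1.1, hab.2⟩ : Edge F a b)) V V hV

lemma iterate_cn {G : FuncSystem Var Val} {X : Finset Var} {x s : Assign Var Val} {V : Var}
    (hGC : V ∈ Cn G) (hX : V ∉ X) (hsG : Compat s G) (n : ℕ) :
    (stepFn G X x)^[n] s V = s V := by
  induction n with
  | zero => rfl
  | succ n ih =>
    rw [Function.iterate_succ_apply']
    simp only [stepFn, if_neg hX, if_pos hGC.1]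
    rw [hGC.2 _ s]
    exact (hsG V hGC.1).symm

lemma iterate_congr {F G : FuncSystem Var Val} (h : sysEquiv F G) {s : Assign Var Val}
    (hsF : Compat s F) (hsG : Compat s G) (X : Finset Var) (x : Assign Var Val) :
    ∀ n, (stepFn F X x)^[n] s = (stepFn G X x)^[n] s := by
  intro n
  induction n with
  | zero => rfl
  | succ n ih =>
    rw [Function.iterate_succ_apply', Function.iterate_succ_apply', ih]
    set w := (stepFn G X x)^[n] s with hw
    funext V
    by_cases hX : V ∈ X
    · simp [stepFn, hX]
    by_cases hFE : V ∈ F.En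
    · by_cases hFC : V ∈ Cn F
      · have hc : F.fn V w = s V := by rw [hFC.2 w s]; exact (hsF V hFE).symm
        by_cases hGE : V ∈ G.En
        · have hGC : V ∈ Cn G := by
            by_contra hGC
            have : V ∈ F.En \ Cn F := by rw [h.1]; exact ⟨hGE, hGC⟩
            exact this.2 hFC
          have hc2 : G.fn V w = s V := by rw [hGC.2 w s]; exact (hsG V hGE).symm
          simp [stepFn, hX, hFE, hGE, hc, hc2]
        · have hi : w V = s V := by rw [hw]; exact iterate_inert hX hGE s n
          simp only [stepFn, if_neg hX, if_pos hFE, if_neg hGE]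
          rw [hc, hi]
      · have hG : V ∈ G.En \ Cn G := by rw [← h.1]; exact ⟨hFE, hFC⟩
        have heq : F.fn V w = G.fn V w := h.2 V ⟨hFE, hFC⟩ w w (fun _ _ _ => rfl)
        simp [stepFn, hX, hFE, hG.1, heq]
    · by_cases hGE : V ∈ G.En
      · have hGC : V ∈ Cn G := by
          by_contra hGC
          have : V ∈ F.En \ Cn F := by rw [h.1]; exact ⟨hGE, hGC⟩
          exact hFE this.1
        have hc2 : G.fn V w = s V := by rw [hGC.2 w s]; exact (hsG V hGE).symm
        have hi : w V = s V := by rw [hw]; exact iterate_cn hGC hX hsG n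
        simp [stepFn, hX, hFE, hGE, hc2, hi]
      · simp [stepFn, hX, hFE, hGE]

lemma interveneAssign_congr {F G : FuncSystem Var Val} (h : sysEquiv F G) {s : Assign Var Val}
    (hsF : Compat s F) (hsG : Compat s G) (X : Finset Var) (x : Assign Var Val) :
    interveneAssign F X x s = interveneAssign G X x s := by
  unfold interveneAssign
  exact iterate_congr h hsF hsG X x _

lemma Cn_restrict (F : FuncSystem Var Val) (X : Finset Var) :
    Cn (restrictSys F X) = Cn F \ ↑X := by
  ext V
  simp only [Cn, restrictSys, Set.mem_setOf_eq, Set.mem_diff]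
  tauto

lemma EnCn_restrict (F : FuncSystem Var Val) (X : Finset Var) :
    (restrictSys F X).En \ Cn (restrictSys F X) = (F.En \ Cn F) \ ↑X := by
  rw [Cn_restrict]
  show (F.En \ ↑X) \ (Cn F \ ↑X) = (F.En \ Cn F) \ ↑X
  ext V
  simp only [Set.mem_diff]
  tauto

lemma sysEquiv_restrict {F G : FuncSystem Var Val} (h : sysEquiv F G) (X : Finset Var) :
    sysEquiv (restrictSys F X) (restrictSys G X) := by
  refine ⟨by rw [EnCn_restrict, EnCn_restrict, h.1], fun V hV => ?_⟩
  rw [EnCn_restrict] at hV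
  exact h.2 V hV.1

end Interv

section GsatBasics
variable {Var : Type} {Val : Var → Type} [DecidableEq Var] [Fintype Var]

lemma gsat_eq_iff {T : GCT Var Val} {V : Var} {v : Val V} :
    gsat T (.eq V v) ↔ ∀ p ∈ T, p.1 V = v := Iff.rfl

lemma gsat_dep_iff {T : GCT Var Val} {Xs : List Var} {Y : Var} :
    gsat T (.dep Xs Y) ↔ ∀ p ∈ T, ∀ q ∈ T, (∀ W ∈ Xs, p.1 W = q.1 W) → p.1 Y = q.1 Y := Iff.rfl

lemma gsat_neg_iff {T : GCT Var Val} {φ : Formula Var Val} :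
    gsat T (.neg φ) ↔ ∀ p ∈ T, ¬ gsat {p} φ := Iff.rfl

lemma gsat_and_iff {T : GCT Var Val} {φ ψ : Formula Var Val} :
    gsat T (.and φ ψ) ↔ gsat T φ ∧ gsat T ψ := Iff.rfl

lemma gsat_or_iff {T : GCT Var Val} {φ ψ : Formula Var Val} :
    gsat T (.or φ ψ) ↔ ∃ T₁ T₂, T₁ ∪ T₂ = T ∧ gsat T₁ φ ∧ gsat T₂ ψ := Iff.rfl

lemma gsat_gor_iff {T : GCT Var Val} {φ ψ : Formula Var Val} :
    gsat T (.gor φ ψ) ↔ gsat T φ ∨ gsat T ψ := Iff.rfl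

lemma gsat_cf_iff {T : GCT Var Val} {X : Finset Var} {x : Assign Var Val}
    {φ : Formula Var Val} :
    gsat T (.cf X x φ) ↔ gsat (gIntervene T X x) φ := Iff.rfl

lemma gsat_mono : ∀ (φ : Formula Var Val) {S T : GCT Var Val}, S ⊆ T → gsat T φ → gsat S φ := by
  intro φ
  induction φ with
  | eq V v => intro S T h hT p hp; exact hT p (h hp)
  | dep Xs Y => intro S T h hT p hp q hq hw; exact hT p (h hp) q (h hq) hw
  | neg φ _ => intro S T h hT p hp; exact hT p (h hp)
  | and φ ψ ih1 ih2 => intro S T h hT; exact ⟨ih1 h hT.1, ih2 h hT.2⟩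
  | or φ ψ ih1 ih2 =>
    intro S T h hT
    obtain ⟨T1, T2, hu, h1, h2⟩ := hT
    refine ⟨T1 ∩ S, T2 ∩ S, ?_, ih1 Set.inter_subset_left h1, ih2 Set.inter_subset_left h2⟩
    rw [← Set.union_inter_distrib_right, hu]
    exact Set.inter_eq_right.2 h
  | gor φ ψ ih1 ih2 =>
    intro S T h hT
    rcases hT with h1 | h2
    · exact Or.inl (ih1 h h1)
    · exact Or.inr (ih2 h h2)
  | cf X x φ ih => intro S T h hT; exact ih (Set.image_mono h) hT

lemma gsat_empty : ∀ φ : Formula Var Val, gsat (∅ : GCT Var Val) φ := by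
  intro φ
  induction φ with
  | eq V v => exact fun p hp => (Set.notMem_empty p hp).elim
  | dep Xs Y => exact fun p hp => (Set.notMem_empty p hp).elim
  | neg φ _ => exact fun p hp => (Set.notMem_empty p hp).elim
  | and φ ψ ih1 ih2 => exact ⟨ih1, ih2⟩
  | or φ ψ ih1 ih2 => exact ⟨∅, ∅, by simp, ih1, ih2⟩
  | gor φ ψ ih1 _ => exact Or.inl ih1
  | cf X x φ ih =>
    rw [gsat_cf_iff]
    unfold gIntervene
    rw [Set.image_empty]
    exact ih

lemma IsGCT.mono {T S : GCT Var Val} (h : IsGCT T) (hs : S ⊆ T) : IsGCT S :=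
  fun p hp => h p (hs hp)

lemma IsGCT.intervene {T : GCT Var Val} (h : IsGCT T) (X : Finset Var) (x : Assign Var Val) :
    IsGCT (gIntervene T X x) := by
  rintro p ⟨q, hq, rfl⟩
  obtain ⟨_, hr⟩ := h q hq
  exact ⟨interveneAssign_compat hr X x q.1, restrict_recursive hr X⟩

end GsatBasics

section Invariance
variable {Var : Type} {Val : Var → Type} [DecidableEq Var] [Fintype Var]

lemma gctEquiv_refl (T : GCT Var Val) : gctEquiv T T := fun _ => rfl

lemma gctEquiv_symm {T S : GCT Var Val} (h : gctEquiv T S) : gctEquiv S T :=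
  fun F => (h F).symm

lemma gctEquiv_match {T S : GCT Var Val} (h : gctEquiv T S)
    {s : Assign Var Val} {G : FuncSystem Var Val} (hm : (s, G) ∈ T) :
    ∃ G', (s, G') ∈ S ∧ sysEquiv G' G := by
  have h1 : s ∈ {a | ∃ G', (a, G') ∈ T ∧ sysEquiv G' G} := ⟨G, hm, sysEquiv_refl G⟩
  rw [h G] at h1
  exact h1

lemma gctEquiv_singleton {s : Assign Var Val} {G G' : FuncSystem Var Val}
    (h : sysEquiv G' G) :
    gctEquiv ({(s, G')} : GCT Var Val) ({(s, G)} : GCT Var Val) := by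
  intro F
  ext a
  simp only [Set.mem_setOf_eq, Set.mem_singleton_iff, Prod.mk.injEq]
  constructor
  · rintro ⟨H, ⟨rfl, rfl⟩, hHF⟩
    exact ⟨G, ⟨rfl, rfl⟩, sysEquiv_trans (sysEquiv_symm h) hHF⟩
  · rintro ⟨H, ⟨rfl, rfl⟩, hHF⟩
    exact ⟨G', ⟨rfl, rfl⟩, sysEquiv_trans h hHF⟩

lemma gctEquiv_intervene_sub {T S : GCT Var Val} (hT : IsGCT T) (hS : IsGCT S)
    (he : gctEquiv T S) (X : Finset Var) (x : Assign Var Val) (F : FuncSystem Var Val) :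
    {a | ∃ G, (a, G) ∈ gIntervene T X x ∧ sysEquiv G F} ⊆
      {a | ∃ G, (a, G) ∈ gIntervene S X x ∧ sysEquiv G F} := by
  rintro a ⟨H, ⟨⟨s, G⟩, hqT, hq⟩, hHF⟩
  obtain ⟨ha, hH⟩ : interveneAssign G X x s = a ∧ restrictSys G X = H := by
    exact ⟨congrArg Prod.fst hq, congrArg Prod.snd hq⟩
  obtain ⟨G', hG'S, hG'G⟩ := gctEquiv_match he hqT
  have hcG : Compat s G := (hT _ hqT).1
  have hcG' : Compat s G' := (hS _ hG'S).1
  have hint : interveneAssign G' X x s = a := by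
    rw [interveneAssign_congr hG'G hcG' hcG X x]; exact ha
  refine ⟨restrictSys G' X, ⟨(s, G'), hG'S, ?_⟩, ?_⟩
  · show (interveneAssign G' X x s, restrictSys G' X) = _
    rw [hint]
  have h1 : sysEquiv (restrictSys G' X) (restrictSys G X) := sysEquiv_restrict hG'G X
  rw [hH] at h1
  exact sysEquiv_trans h1 hHF

lemma gctEquiv_intervene {T S : GCT Var Val} (hT : IsGCT T) (hS : IsGCT S)
    (he : gctEquiv T S) (X : Finset Var) (x : Assign Var Val) :
    gctEquiv (gIntervene T X x) (gIntervene S X x) := by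
  intro F
  apply Set.Subset.antisymm
  · exact gctEquiv_intervene_sub hT hS he X x F
  · exact gctEquiv_intervene_sub hS hT (gctEquiv_symm he) X x F

lemma gsat_invariant : ∀ (φ : Formula Var Val) (T S : GCT Var Val), IsGCT T → IsGCT S →
    gctEquiv T S → gsat T φ → gsat S φ := by
  intro φ
  induction φ with
  | eq V v =>
    rintro T S _ _ he h ⟨s, G⟩ hp
    obtain ⟨G', hG', _⟩ := gctEquiv_match (gctEquiv_symm he) hp
    exact h (s, G') hG'
  | dep Xs Y =>
    rintro T S _ _ he h ⟨s, G⟩ hp ⟨t, H⟩ hq hagree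
    obtain ⟨G', hG', _⟩ := gctEquiv_match (gctEquiv_symm he) hp
    obtain ⟨H', hH', _⟩ := gctEquiv_match (gctEquiv_symm he) hq
    exact h (s, G') hG' (t, H') hH' hagree
  | neg φ ih =>
    rintro T S hT hS he h ⟨s, G⟩ hp hsat
    obtain ⟨G', hG', hGG⟩ := gctEquiv_match (gctEquiv_symm he) hp
    refine h (s, G') hG' ?_
    refine ih {(s, G)} {(s, G')} ?_ ?_ ?_ hsat
    · intro q hq; rw [Set.mem_singleton_iff] at hq; subst hq; exact hS _ hp
    · intro q hq; rw [Set.mem_singleton_iff] at hq; subst hq; exact hT _ hG'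
    · exact gctEquiv_singleton (sysEquiv_symm hGG)
  | and φ ψ ih1 ih2 =>
    intro T S hT hS he h
    exact ⟨ih1 T S hT hS he h.1, ih2 T S hT hS he h.2⟩
  | or φ ψ ih1 ih2 =>
    intro T S hT hS he h
    obtain ⟨T1, T2, hu, h1, h2⟩ := h
    have key : ∀ T' : GCT Var Val, T' ⊆ T →
        gctEquiv T' {p ∈ S | ∃ G', (p.1, G') ∈ T' ∧ sysEquiv G' p.2} := by
      intro T' hT' F
      ext a
      simp only [Set.mem_setOf_eq]
      constructor
      · rintro ⟨G, haG, hGF⟩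
        obtain ⟨G'', hG''S, hG''G⟩ := gctEquiv_match he (hT' haG)
        exact ⟨G'', ⟨hG''S, ⟨G, haG, sysEquiv_symm hG''G⟩⟩, sysEquiv_trans hG''G hGF⟩
      · rintro ⟨H, ⟨_, ⟨G', hG'T', hG'H⟩⟩, hHF⟩
        exact ⟨G', hG'T', sysEquiv_trans hG'H hHF⟩
    refine ⟨{p ∈ S | ∃ G', (p.1, G') ∈ T1 ∧ sysEquiv G' p.2},
            {p ∈ S | ∃ G', (p.1, G') ∈ T2 ∧ sysEquiv G' p.2}, ?_, ?_, ?_⟩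
    · apply Set.Subset.antisymm
      · rintro p (hp | hp) <;> exact hp.1
      · rintro ⟨s, G⟩ hp
        obtain ⟨G', hG'T, hG'G⟩ := gctEquiv_match (gctEquiv_symm he) hp
        rw [← hu] at hG'T
        rcases hG'T with hm | hm
        · exact Or.inl ⟨hp, G', hm, hG'G⟩
        · exact Or.inr ⟨hp, G', hm, hG'G⟩
    · exact ih1 T1 _ (hT.mono (by rw [← hu]; exact Set.subset_union_left))
        (hS.mono (Set.sep_subset _ _)) (key T1 (by rw [← hu]; exact Set.subset_union_left)) h1
    · exact ih2 T2 _ (hT.mono (by rw [← hu]; exact Set.subset_union_right))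
        (hS.mono (Set.sep_subset _ _)) (key T2 (by rw [← hu]; exact Set.subset_union_right)) h2
  | gor φ ψ ih1 ih2 =>
    intro T S hT hS he h
    rcases h with h | h
    · exact Or.inl (ih1 T S hT hS he h)
    · exact Or.inr (ih2 T S hT hS he h)
  | cf X x φ ih =>
    intro T S hT hS he h
    exact ih _ _ (hT.intervene X x) (hS.intervene X x) (gctEquiv_intervene hT hS he X x) h

end Invariance

section Closures
variable {Var : Type} {Val : Var → Type} [DecidableEq Var] [Fintype Var]

lemma closures_of_definable {K : Set (GCT Var Val)} (hK : ∀ T ∈ K, IsGCT T)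
    (φ : Formula Var Val) (hφ : ∀ T : GCT Var Val, IsGCT T → (T ∈ K ↔ gsat T φ)) :
    (∀ T ∈ K, ∀ S : GCT Var Val, S ⊆ T → S ∈ K) ∧
    (∀ T S : GCT Var Val, IsGCT T → IsGCT S → T ∈ K → gctEquiv T S → S ∈ K) := by
  constructor
  · intro T hT S hS
    have hgT := hK T hT
    exact (hφ S (hgT.mono hS)).2 (gsat_mono φ hS ((hφ T hgT).1 hT))
  · intro T S hgT hgS hT he
    exact (hφ S hgS).2 (gsat_invariant φ T S hgT hgS he ((hφ T hgT).1 hT))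

end Closures

section Construction
variable {Var : Type} {Val : Var → Type} [DecidableEq Var] [Fintype Var] [Nonempty Var]
  [∀ V, Fintype (Val V)] [∀ V, Nonempty (Val V)]

lemma gsat_falsum {T : GCT Var Val} : gsat T falsum ↔ T = ∅ := by
  constructor
  · intro h
    obtain ⟨h1, h2⟩ := h
    ext p
    simp only [Set.mem_empty_iff_false, iff_false]
    intro hp
    refine h2 p hp ?_
    intro q hq
    rw [Set.mem_singleton_iff] at hq
    rw [hq]
    exact h1 p hp
  · rintro rfl
    constructor
    · intro p hp; exact (Set.notMem_empty p hp).elim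
    · intro p hp; exact (Set.notMem_empty p hp).elim

lemma bigAnd_cons₂ (φ ψ : Formula Var Val) (l : List (Formula Var Val)) :
    bigAnd (φ :: ψ :: l) = .and φ (bigAnd (ψ :: l)) := rfl

lemma bigOr_cons₂ (φ ψ : Formula Var Val) (l : List (Formula Var Val)) :
    bigOr (φ :: ψ :: l) = .or φ (bigOr (ψ :: l)) := rfl

lemma bigGor_cons₂ (φ ψ : Formula Var Val) (l : List (Formula Var Val)) :
    bigGor (φ :: ψ :: l) = .gor φ (bigGor (ψ :: l)) := rfl

lemma gsat_bigAnd {T : GCT Var Val} : ∀ {l : List (Formula Var Val)},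
    gsat T (bigAnd l) ↔ ∀ φ ∈ l, gsat T φ := by
  intro l
  induction l with
  | nil =>
    constructor
    · intro _ φ hφ; exact absurd hφ (List.not_mem_nil (a := φ))
    · intro _ p hp hf
      exact Set.singleton_ne_empty p (gsat_falsum.1 hf)
  | cons φ l ih =>
    cases l with
    | nil =>
      constructor
      · intro h χ hχ; rw [List.mem_singleton] at hχ; subst hχ; exact h
      · intro h; exact h φ (List.mem_singleton.2 rfl)
    | cons ψ l' =>
      rw [bigAnd_cons₂, gsat_and_iff]
      constructor
      · intro h χ hχ
        rw [List.mem_cons] at hχ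
        rcases hχ with rfl | hχ
        · exact h.1
        · exact ih.1 h.2 χ hχ
      · intro h
        exact ⟨h φ (List.mem_cons_self), ih.2 (fun χ hχ => h χ (List.mem_cons_of_mem _ hχ))⟩

lemma gsat_bigGor {T : GCT Var Val} : ∀ {l : List (Formula Var Val)}, l ≠ [] →
    (gsat T (bigGor l) ↔ ∃ φ ∈ l, gsat T φ) := by
  intro l
  induction l with
  | nil => intro h; exact absurd rfl h
  | cons φ l ih =>
    intro _
    cases l with
    | nil =>
      constructor
      · intro h; exact ⟨φ, List.mem_singleton.2 rfl, h⟩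
      · rintro ⟨χ, hχ, h⟩; rw [List.mem_singleton] at hχ; subst hχ; exact h
    | cons ψ l' =>
      rw [bigGor_cons₂, gsat_gor_iff]
      constructor
      · rintro (h | h)
        · exact ⟨φ, List.mem_cons_self, h⟩
        · obtain ⟨χ, hχ, hs⟩ := (ih (by simp)).1 h
          exact ⟨χ, List.mem_cons_of_mem _ hχ, hs⟩
      · rintro ⟨χ, hχ, hs⟩
        rw [List.mem_cons] at hχ
        rcases hχ with rfl | hχ
        · exact Or.inl hs
        · exact Or.inr ((ih (by simp)).2 ⟨χ, hχ, hs⟩)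

def Flat (φ : Formula Var Val) : Prop :=
  ∀ U : GCT Var Val, gsat U φ ↔ ∀ q ∈ U, gsat {q} φ

lemma gsat_bigOr_flat : ∀ {l : List (Formula Var Val)},
    (∀ φ ∈ l, Flat φ) → ∀ {T : GCT Var Val},
    (gsat T (bigOr l) ↔ ∀ q ∈ T, ∃ φ ∈ l, gsat {q} φ) := by
  intro l
  induction l with
  | nil =>
    intro _ T
    rw [show bigOr ([] : List (Formula Var Val)) = falsum from rfl, gsat_falsum]
    constructor
    · rintro rfl q hq; exact (Set.notMem_empty q hq).elim
    · intro h; ext q; simp only [Set.mem_empty_iff_false, iff_false]; intro hq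
      obtain ⟨φ, hφ, _⟩ := h q hq; exact (List.not_mem_nil (a := φ)) hφ
  | cons φ l ih =>
    intro hl T
    cases l with
    | nil =>
      rw [show bigOr [φ] = φ from rfl, hl φ (List.mem_singleton.2 rfl) T]
      constructor
      · intro h q hq; exact ⟨φ, List.mem_singleton.2 rfl, h q hq⟩
      · intro h q hq
        obtain ⟨ψ, hψ, hs⟩ := h q hq
        rw [List.mem_singleton] at hψ; subst hψ; exact hs
    | cons ψ l' =>
      rw [bigOr_cons₂, gsat_or_iff]
      constructor
      · rintro ⟨T1, T2, hu, h1, h2⟩ q hq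
        rw [← hu] at hq
        rcases hq with hq | hq
        · exact ⟨φ, List.mem_cons_self, (hl φ (List.mem_cons_self) T1).1 h1 q hq⟩
        · obtain ⟨χ, hχ, hs⟩ :=
            (ih (fun χ hχ => hl χ (List.mem_cons_of_mem _ hχ))).1 h2 q hq
          exact ⟨χ, List.mem_cons_of_mem _ hχ, hs⟩
      · intro h
        refine ⟨{r ∈ T | gsat {r} φ}, {r ∈ T | ∃ χ ∈ ψ :: l', gsat {r} χ}, ?_, ?_, ?_⟩
        · apply Set.Subset.antisymm
          · rintro q (⟨hq, _⟩ | ⟨hq, _⟩) <;> exact hq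
          · intro q hq
            obtain ⟨χ, hχ, hs⟩ := h q hq
            rw [List.mem_cons] at hχ
            rcases hχ with rfl | hχ
            · exact Or.inl ⟨hq, hs⟩
            · exact Or.inr ⟨hq, χ, hχ, hs⟩
        · exact (hl φ (List.mem_cons_self) _).2 (fun q hq => hq.2)
        · exact (ih (fun χ hχ => hl χ (List.mem_cons_of_mem _ hχ))).2 (fun q hq => hq.2)

noncomputable def valOf (F : FuncSystem Var Val) (s : Assign Var Val) (V : Var)
    (w : Assign Var Val) : Val V :=
  if V ∈ F.En then F.fn V w else s V

lemma interveneAssign_erase (F : FuncSystem Var Val) (s w : Assign Var Val) (V : Var) :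
    interveneAssign F (Finset.univ.erase V) w s V = valOf F s V w := by
  have hV : V ∉ Finset.univ.erase V := by simp
  obtain ⟨m, hm⟩ : ∃ m, Fintype.card Var = m + 1 :=
    ⟨Fintype.card Var - 1, by have := Fintype.card_pos (α := Var); omega⟩
  unfold interveneAssign valOf
  rw [hm, Function.iterate_succ_apply']
  by_cases hE : V ∈ F.En
  · simp only [stepFn, if_neg hV, if_pos hE]
    apply F.dep_only
    intro W hW
    have hWV : W ≠ V := fun hc => F.pa_ne V (hc ▸ hW)
    have hWX : W ∈ Finset.univ.erase V := by simp [hWV]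
    exact iterate_mem_X s hWX (by omega)
  · simp only [stepFn, if_neg hV, if_neg hE]
    exact iterate_inert hV hE s _

lemma valOf_char {F G : FuncSystem Var Val} {s : Assign Var Val}
    (hsF : Compat s F) (hsG : Compat s G) :
    (∀ (V : Var) (w : Assign Var Val), valOf F s V w = valOf G s V w) ↔ sysEquiv F G := by
  constructor
  · intro hV
    have hside : ∀ {F' G' : FuncSystem Var Val},
        (∀ (V : Var) (w : Assign Var Val), valOf F' s V w = valOf G' s V w) →
        ∀ V, V ∈ F'.En \ Cn F' → V ∈ G'.En \ Cn G' := by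
      intro F' G' h V hVF
      have hne : ¬ ∀ w1 w2 : Assign Var Val, F'.fn V w1 = F'.fn V w2 := by
        intro hc; exact hVF.2 ⟨hVF.1, hc⟩
      push_neg at hne
      obtain ⟨w1, w2, hw⟩ := hne
      have h1 := h V w1
      have h2 := h V w2
      unfold valOf at h1 h2
      rw [if_pos hVF.1] at h1 h2
      by_cases hGE : V ∈ G'.En
      · rw [if_pos hGE] at h1 h2
        refine ⟨hGE, fun hGC => hw ?_⟩
        rw [h1, h2]
        exact hGC.2 w1 w2
      · rw [if_neg hGE] at h1 h2
        exact absurd (h1.trans h2.symm) hw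
    refine ⟨Set.Subset.antisymm (fun V hVF => hside hV V hVF)
      (fun V hVG => hside (fun V w => (hV V w).symm) V hVG), ?_⟩
    intro V hVF s0 t0 hst
    have hVG := hside hV V hVF
    set u : Assign Var Val := fun W => if W ∈ F.PA V then s0 W else t0 W with hu
    have e1 : F.fn V s0 = F.fn V u := F.dep_only V s0 u (fun W hW => by simp [hu, hW])
    have e2 : F.fn V u = G.fn V u := by
      have h3 := hV V u
      unfold valOf at h3
      rwa [if_pos hVF.1, if_pos hVG.1] at h3
    have e3 : G.fn V u = G.fn V t0 := by
      refine G.dep_only V u t0 (fun W hW => ?_)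
      by_cases hF : W ∈ F.PA V
      · simpa [hu, hF] using hst W hF hW
      · simp [hu, hF]
    rw [e1, e2, e3]
  · intro hFG V w
    unfold valOf
    by_cases hFE : V ∈ F.En
    · by_cases hFC : V ∈ Cn F
      · rw [if_pos hFE]
        have hF : F.fn V w = s V := by rw [hFC.2 w s]; exact (hsF V hFE).symm
        by_cases hGE : V ∈ G.En
        · have hGC : V ∈ Cn G := by
            by_contra hGC
            have hx : V ∈ F.En \ Cn F := by rw [hFG.1]; exact ⟨hGE, hGC⟩
            exact hx.2 hFC
          rw [if_pos hGE, hF, hGC.2 w s]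
          exact hsG V hGE
        · rw [if_neg hGE, hF]
      · have hG : V ∈ G.En \ Cn G := by rw [← hFG.1]; exact ⟨hFE, hFC⟩
        rw [if_pos hFE, if_pos hG.1]
        exact hFG.2 V ⟨hFE, hFC⟩ w w (fun _ _ _ => rfl)
    · by_cases hGE : V ∈ G.En
      · have hGC : V ∈ Cn G := by
          by_contra hGC
          have hx : V ∈ F.En \ Cn F := by rw [hFG.1]; exact ⟨hGE, hGC⟩
          exact hFE hx.1
        rw [if_neg hFE, if_pos hGE, hGC.2 w s]
        exact hsG V hGE
      · rw [if_neg hFE, if_neg hGE]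

lemma pairEquiv_char {q c : Assign Var Val × FuncSystem Var Val}
    (hq : Compat q.1 q.2 ∧ RecursiveSys q.2) (hc : Compat c.1 c.2 ∧ RecursiveSys c.2) :
    pairEquiv q c ↔ (q.1 = c.1 ∧ ∀ (V : Var) (w : Assign Var Val),
      valOf q.2 q.1 V w = valOf c.2 c.1 V w) := by
  constructor
  · rintro ⟨h1, h2⟩
    refine ⟨h1, fun V w => ?_⟩
    have hc2 : Compat q.1 c.2 := by rw [h1]; exact hc.1
    have h3 := (valOf_char hq.1 hc2).2 h2 V w
    rw [h1] at h3
    rw [h1]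
    exact h3
  · rintro ⟨h1, h2⟩
    refine ⟨h1, ?_⟩
    have hc2 : Compat q.1 c.2 := by rw [h1]; exact hc.1
    apply (valOf_char hq.1 hc2).1
    intro V w
    have h2' := h2 V w
    rw [h1] at h2' ⊢
    exact h2'


noncomputable def gammaF (c : Assign Var Val × FuncSystem Var Val) : Formula Var Val :=
  bigAnd ((Finset.univ : Finset Var).toList.map fun V =>
    bigAnd ((Finset.univ : Finset (Assign Var Val)).toList.map fun w =>
      Formula.cf (Finset.univ.erase V) w (Formula.eq V (valOf c.2 c.1 V w))))

noncomputable def deltaF (c : Assign Var Val × FuncSystem Var Val) : Formula Var Val :=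
  .and (eqConj c.1) (gammaF c)

lemma gsat_cf_eq {T : GCT Var Val} {X : Finset Var} {x : Assign Var Val} {V : Var}
    {v : Val V} :
    gsat T (.cf X x (.eq V v)) ↔ ∀ q ∈ T, interveneAssign q.2 X x q.1 V = v := by
  rw [gsat_cf_iff, gsat_eq_iff]
  constructor
  · intro h q hq; exact h _ ⟨q, hq, rfl⟩
  · rintro h p ⟨q, hq, rfl⟩; exact h q hq

lemma gsat_eqConj {T : GCT Var Val} {s : Assign Var Val} :
    gsat T (eqConj s) ↔ ∀ q ∈ T, q.1 = s := by
  unfold eqConj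
  rw [gsat_bigAnd]
  constructor
  · intro h q hq
    funext V
    exact h (Formula.eq V (s V)) (List.mem_map.2 ⟨V, by simp, rfl⟩) q hq
  · rintro h φ hφ
    rw [List.mem_map] at hφ
    obtain ⟨V, _, rfl⟩ := hφ
    intro q hq
    rw [h q hq]

lemma gsat_gammaF {T : GCT Var Val} {c : Assign Var Val × FuncSystem Var Val} :
    gsat T (gammaF c) ↔ ∀ q ∈ T, ∀ (V : Var) (w : Assign Var Val),
      valOf q.2 q.1 V w = valOf c.2 c.1 V w := by
  unfold gammaF
  rw [gsat_bigAnd]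
  constructor
  · intro h q hq V w
    have h1 := h _ (List.mem_map.2 ⟨V, by simp, rfl⟩)
    rw [gsat_bigAnd] at h1
    have h2 := h1 _ (List.mem_map.2 ⟨w, by simp, rfl⟩)
    have h3 := gsat_cf_eq.1 h2 q hq
    rw [← interveneAssign_erase q.2 q.1 w V]
    exact h3
  · intro h φ hφ
    rw [List.mem_map] at hφ
    obtain ⟨V, _, rfl⟩ := hφ
    rw [gsat_bigAnd]
    intro ψ hψ
    rw [List.mem_map] at hψ
    obtain ⟨w, _, rfl⟩ := hψ
    refine gsat_cf_eq.2 (fun q hq => ?_)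
    rw [interveneAssign_erase]
    exact h q hq V w

lemma gsat_deltaF {T : GCT Var Val} {c : Assign Var Val × FuncSystem Var Val} :
    gsat T (deltaF c) ↔ ∀ q ∈ T, q.1 = c.1 ∧ ∀ (V : Var) (w : Assign Var Val),
      valOf q.2 q.1 V w = valOf c.2 c.1 V w := by
  unfold deltaF
  rw [gsat_and_iff, gsat_eqConj, gsat_gammaF]
  constructor
  · intro h q hq; exact ⟨h.1 q hq, h.2 q hq⟩
  · intro h; exact ⟨fun q hq => (h q hq).1, fun q hq => (h q hq).2⟩

lemma deltaF_flat (c : Assign Var Val × FuncSystem Var Val) : Flat (deltaF c) := by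
  intro U
  constructor
  · intro h q hq
    rw [gsat_deltaF]
    intro q' hq'
    rw [Set.mem_singleton_iff] at hq'
    rw [hq']
    exact gsat_deltaF.1 h q hq
  · intro h
    rw [gsat_deltaF]
    intro q hq
    exact gsat_deltaF.1 (h q hq) q rfl

lemma gsat_deltaF_pair {q c : Assign Var Val × FuncSystem Var Val}
    (hq : Compat q.1 q.2 ∧ RecursiveSys q.2) (hc : Compat c.1 c.2 ∧ RecursiveSys c.2) :
    gsat ({q} : GCT Var Val) (deltaF c) ↔ pairEquiv q c := by
  rw [gsat_deltaF, pairEquiv_char hq hc]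
  constructor
  · intro h; exact h q rfl
  · intro h q' hq'
    rw [Set.mem_singleton_iff] at hq'
    rw [hq']
    exact h

noncomputable def chiGen (con : Var → Formula Var Val) : Formula Var Val :=
  .and (bigAnd ((Finset.univ : Finset Var).toList.map fun V =>
          bigAnd ((Finset.univ : Finset (Assign Var Val)).toList.map fun w =>
            Formula.cf (Finset.univ.erase V) w (con V))))
       (bigAnd ((Finset.univ : Finset Var).toList.map con))

def ConOK (con : Var → Formula Var Val) : Prop :=
  ∀ (U : GCT Var Val) (V : Var), gsat U (con V) ↔ ∀ p ∈ U, ∀ q ∈ U, p.1 V = q.1 V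

lemma gsat_chiGen {con : Var → Formula Var Val} (hcon : ConOK con) {T : GCT Var Val}
    (hT : IsGCT T) :
    gsat T (chiGen con) ↔ ∀ p ∈ T, ∀ q ∈ T, pairEquiv p q := by
  unfold chiGen
  rw [gsat_and_iff, gsat_bigAnd, gsat_bigAnd]
  constructor
  · rintro ⟨h1, h2⟩ p hp q hq
    have hass : p.1 = q.1 := by
      funext V
      exact (hcon T V).1 (h2 (con V) (List.mem_map.2 ⟨V, by simp, rfl⟩)) p hp q hq
    have hval : ∀ (V : Var) (w : Assign Var Val), valOf p.2 p.1 V w = valOf q.2 q.1 V w := by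
      intro V w
      have h3 := h1 _ (List.mem_map.2 ⟨V, by simp, rfl⟩)
      rw [gsat_bigAnd] at h3
      have h4 := h3 _ (List.mem_map.2 ⟨w, by simp, rfl⟩)
      rw [gsat_cf_iff] at h4
      have h5 := (hcon _ V).1 h4 _ ⟨p, hp, rfl⟩ _ ⟨q, hq, rfl⟩
      rw [show ((fun p => (interveneAssign p.2 (Finset.univ.erase V) w p.1,
          restrictSys p.2 (Finset.univ.erase V))) p).1 = interveneAssign p.2
          (Finset.univ.erase V) w p.1 from rfl] at h5
      rw [show ((fun p => (interveneAssign p.2 (Finset.univ.erase V) w p.1,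
          restrictSys p.2 (Finset.univ.erase V))) q).1 = interveneAssign q.2
          (Finset.univ.erase V) w q.1 from rfl] at h5
      rw [interveneAssign_erase, interveneAssign_erase] at h5
      exact h5
    exact (pairEquiv_char (hT p hp) (hT q hq)).2 ⟨hass, hval⟩
  · intro h
    constructor
    · intro φ hφ
      rw [List.mem_map] at hφ
      obtain ⟨V, _, rfl⟩ := hφ
      rw [gsat_bigAnd]
      intro ψ hψ
      rw [List.mem_map] at hψ
      obtain ⟨w, _, rfl⟩ := hψ
      rw [gsat_cf_iff]
      refine (hcon _ V).2 ?_
      rintro p' ⟨p, hp, rfl⟩ q' ⟨q, hq, rfl⟩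
      show interveneAssign p.2 (Finset.univ.erase V) w p.1 V =
        interveneAssign q.2 (Finset.univ.erase V) w q.1 V
      rw [interveneAssign_erase, interveneAssign_erase]
      exact ((pairEquiv_char (hT p hp) (hT q hq)).1 (h p hp q hq)).2 V w
    · intro φ hφ
      rw [List.mem_map] at hφ
      obtain ⟨V, _, rfl⟩ := hφ
      refine (hcon T V).2 (fun p hp q hq => ?_)
      rw [(h p hp q hq).1]

noncomputable def chis (con : Var → Formula Var Val) (r : ℕ) : Formula Var Val :=
  bigOr (List.replicate r (chiGen con))

lemma gsat_chis {con : Var → Formula Var Val} (hcon : ConOK con) :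
    ∀ (r : ℕ) {T : GCT Var Val}, IsGCT T →
    (gsat T (chis con r) ↔ ∃ l : List (Assign Var Val × FuncSystem Var Val),
      l.length ≤ r ∧ ∀ q ∈ T, ∃ c ∈ l, pairEquiv q c) := by
  intro r
  induction r with
  | zero =>
    intro T _
    rw [show chis con 0 = falsum from rfl, gsat_falsum]
    constructor
    · rintro rfl
      exact ⟨[], by simp, fun q hq => (Set.notMem_empty q hq).elim⟩
    · rintro ⟨l, hl, hcov⟩
      have hln : l = [] := List.length_eq_zero_iff.1 (Nat.le_zero.1 hl)
      subst hln
      ext q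
      simp only [Set.mem_empty_iff_false, iff_false]
      intro hq
      obtain ⟨c, hc, _⟩ := hcov q hq
      exact (List.not_mem_nil (a := c)) hc
  | succ r ih =>
    intro T hT
    cases r with
    | zero =>
      rw [show chis con 1 = chiGen con from rfl, gsat_chiGen hcon hT]
      constructor
      · intro h
        rcases Set.eq_empty_or_nonempty T with rfl | ⟨q0, hq0⟩
        · exact ⟨[], by simp, fun q hq => (Set.notMem_empty q hq).elim⟩
        · exact ⟨[q0], by simp, fun q hq => ⟨q0, List.mem_singleton.2 rfl, h q hq q0 hq0⟩⟩
      · rintro ⟨l, hl, hcov⟩ p hp q hq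
        obtain ⟨c, hc, hpc⟩ := hcov p hp
        obtain ⟨c', hc', hqc⟩ := hcov q hq
        have hcc : c = c' := by
          cases l with
          | nil => exact absurd hc (List.not_mem_nil (a := c))
          | cons a l' =>
            cases l' with
            | nil =>
              rw [List.mem_singleton] at hc hc'
              rw [hc, hc']
            | cons b l'' => simp at hl
        rw [hcc] at hpc
        exact pairEquiv_trans hpc (pairEquiv_symm hqc)
    | succ r' =>
      rw [show chis con (r' + 1 + 1) = .or (chiGen con) (chis con (r' + 1)) from rfl,
        gsat_or_iff]
      constructor
      · rintro ⟨T1, T2, hu, h1, h2⟩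
        have hT1 : IsGCT T1 := hT.mono (by rw [← hu]; exact Set.subset_union_left)
        have hT2 : IsGCT T2 := hT.mono (by rw [← hu]; exact Set.subset_union_right)
        obtain ⟨l2, hl2, hcov2⟩ := (ih hT2).1 h2
        rcases Set.eq_empty_or_nonempty T1 with rfl | ⟨q0, hq0⟩
        · refine ⟨l2, le_trans hl2 (by omega), fun q hq => ?_⟩
          rw [← hu] at hq
          rcases hq with hq | hq
          · exact (Set.notMem_empty q hq).elim
          · exact hcov2 q hq
        · have hall := (gsat_chiGen hcon hT1).1 h1
          refine ⟨q0 :: l2, by simp only [List.length_cons]; omega, fun q hq => ?_⟩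
          rw [← hu] at hq
          rcases hq with hq | hq
          · exact ⟨q0, List.mem_cons_self, hall q hq q0 hq0⟩
          · obtain ⟨c, hc, hqc⟩ := hcov2 q hq
            exact ⟨c, List.mem_cons_of_mem _ hc, hqc⟩
      · rintro ⟨l, hl, hcov⟩
        cases l with
        | nil =>
          have hTe : T = ∅ := by
            ext q
            simp only [Set.mem_empty_iff_false, iff_false]
            intro hq
            obtain ⟨c, hc, _⟩ := hcov q hq
            exact (List.not_mem_nil (a := c)) hc
          subst hTe
          exact ⟨∅, ∅, by simp, gsat_empty _, gsat_empty _⟩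
        | cons c0 l' =>
          refine ⟨{r ∈ T | pairEquiv r c0}, {r ∈ T | ∃ c ∈ l', pairEquiv r c}, ?_, ?_, ?_⟩
          · apply Set.Subset.antisymm
            · rintro q (⟨hq, _⟩ | ⟨hq, _⟩) <;> exact hq
            · intro q hq
              obtain ⟨c, hc, hqc⟩ := hcov q hq
              rw [List.mem_cons] at hc
              rcases hc with rfl | hc
              · exact Or.inl ⟨hq, hqc⟩
              · exact Or.inr ⟨hq, c, hc, hqc⟩
          · rw [gsat_chiGen hcon (hT.mono (Set.sep_subset _ _))]
            rintro p ⟨hp, hpc⟩ q ⟨hq, hqc⟩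
            exact pairEquiv_trans hpc (pairEquiv_symm hqc)
          · rw [ih (hT.mono (Set.sep_subset _ _))]
            refine ⟨l', by simp only [List.length_cons] at hl; omega, fun q hq => hq.2⟩

noncomputable def RFin (Var : Type) (Val : Var → Type) [DecidableEq Var] [Fintype Var]
    [∀ V, Fintype (Val V)] : Finset (Assign Var Val × FuncSystem Var Val) :=
  Set.Finite.toFinset (Set.toFinite {p | Compat p.1 p.2 ∧ RecursiveSys p.2})

lemma mem_RFin {p : Assign Var Val × FuncSystem Var Val} :
    p ∈ RFin Var Val ↔ (Compat p.1 p.2 ∧ RecursiveSys p.2) := by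
  simp [RFin, Set.Finite.mem_toFinset]

noncomputable def nclasses (B : Finset (Assign Var Val × FuncSystem Var Val)) : ℕ :=
  (B.image (Quotient.mk pairSetoid)).card

def Realizes (T : GCT Var Val) (b : Assign Var Val × FuncSystem Var Val) : Prop :=
  ∃ q ∈ T, pairEquiv q b

def BadB (K : Set (GCT Var Val)) (B : Finset (Assign Var Val × FuncSystem Var Val)) : Prop :=
  ∀ T ∈ K, ¬ ∀ b ∈ B, Realizes T b

noncomputable def Bbar (B : Finset (Assign Var Val × FuncSystem Var Val)) :
    Finset (Assign Var Val × FuncSystem Var Val) :=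
  (RFin Var Val).filter (fun c => ∃ b ∈ B, pairEquiv c b)

noncomputable def phiB (con : Var → Formula Var Val)
    (B : Finset (Assign Var Val × FuncSystem Var Val)) : Formula Var Val :=
  .or (chis con (nclasses B - 1)) (bigOr (((RFin Var Val) \ Bbar B).toList.map deltaF))

noncomputable def phiK (con : Var → Formula Var Val) (K : Set (GCT Var Val)) :
    Formula Var Val :=
  bigAnd ((((RFin Var Val).powerset.filter (BadB K)).toList).map (phiB con))

lemma deltaF_list_flat {B : Finset (Assign Var Val × FuncSystem Var Val)} :
    ∀ φ ∈ ((RFin Var Val) \ Bbar B).toList.map deltaF, Flat φ := by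
  intro φ hφ
  rw [List.mem_map] at hφ
  obtain ⟨c, _, rfl⟩ := hφ
  exact deltaF_flat c

lemma gsat_phiB {con : Var → Formula Var Val} (hcon : ConOK con)
    {B : Finset (Assign Var Val × FuncSystem Var Val)}
    (hBne : B.Nonempty) {T : GCT Var Val} (hT : IsGCT T) :
    gsat T (phiB con B) ↔ ¬ ∀ b ∈ B, Realizes T b := by
  unfold phiB
  rw [gsat_or_iff]
  constructor
  · rintro ⟨T1, T2, hu, h1, h2⟩ hall
    have hT1 : IsGCT T1 := hT.mono (by rw [← hu]; exact Set.subset_union_left)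
    obtain ⟨l, hl, hcov⟩ := (gsat_chis hcon _ hT1).1 h1
    have h2' := (gsat_bigOr_flat deltaF_list_flat).1 h2
    have hB : ∀ b ∈ B, ∃ c ∈ l, pairEquiv b c := by
      intro b hb
      obtain ⟨q, hqT, hqb⟩ := hall b hb
      rw [← hu] at hqT
      rcases hqT with hq1 | hq2
      · obtain ⟨c, hc, hqc⟩ := hcov q hq1
        exact ⟨c, hc, pairEquiv_trans (pairEquiv_symm hqb) hqc⟩
      · exfalso
        obtain ⟨φ, hφ, hsat⟩ := h2' q hq2
        rw [List.mem_map] at hφ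
        obtain ⟨c, hcl, rfl⟩ := hφ
        rw [Finset.mem_toList, Finset.mem_sdiff] at hcl
        have hgq : Compat q.1 q.2 ∧ RecursiveSys q.2 := hT q (by rw [← hu]; exact Or.inr hq2)
        have hgc : Compat c.1 c.2 ∧ RecursiveSys c.2 := mem_RFin.1 hcl.1
        have hqc : pairEquiv q c := (gsat_deltaF_pair hgq hgc).1 hsat
        apply hcl.2
        unfold Bbar
        rw [Finset.mem_filter]
        exact ⟨hcl.1, b, hb, pairEquiv_trans (pairEquiv_symm hqc) hqb⟩
    have hsub : B.image (Quotient.mk pairSetoid) ⊆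
        (l.map (Quotient.mk pairSetoid)).toFinset := by
      intro x hx
      rw [Finset.mem_image] at hx
      obtain ⟨b, hb, rfl⟩ := hx
      obtain ⟨c, hc, hbc⟩ := hB b hb
      rw [List.mem_toFinset, List.mem_map]
      exact ⟨c, hc, (Quotient.sound hbc).symm⟩
    have hcard := Finset.card_le_card hsub
    have h2c : (l.map (Quotient.mk pairSetoid)).toFinset.card ≤ l.length := by
      have := List.toFinset_card_le (l.map (Quotient.mk pairSetoid))
      rwa [List.length_map] at this
    have hpos : 1 ≤ nclasses B := Finset.card_pos.2 (hBne.image _)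
    unfold nclasses at *
    omega
  · intro hnall
    push_neg at hnall
    obtain ⟨b0, hb0, hnr⟩ := hnall
    refine ⟨{q ∈ T | ∃ b ∈ B, pairEquiv q b}, {q ∈ T | ¬ ∃ b ∈ B, pairEquiv q b}, ?_, ?_, ?_⟩
    · apply Set.Subset.antisymm
      · rintro q (⟨hq, _⟩ | ⟨hq, _⟩) <;> exact hq
      · intro q hq
        by_cases h : ∃ b ∈ B, pairEquiv q b
        · exact Or.inl ⟨hq, h⟩
        · exact Or.inr ⟨hq, h⟩
    · rw [gsat_chis hcon _ (hT.mono (Set.sep_subset _ _))]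
      refine ⟨(((B.image (Quotient.mk pairSetoid)).erase
          (Quotient.mk pairSetoid b0)).toList).map Quotient.out, ?_, ?_⟩
      · rw [List.length_map, Finset.length_toList,
          Finset.card_erase_of_mem (Finset.mem_image_of_mem _ hb0)]
        rfl
      · rintro q ⟨hqT, b, hb, hqb⟩
        have hne : ¬ pairEquiv q b0 := fun hc => hnr ⟨q, hqT, hc⟩
        have hxb : (Quotient.mk pairSetoid b) ≠ (Quotient.mk pairSetoid b0) := by
          intro hc
          exact hne (pairEquiv_trans hqb (Quotient.exact hc))
        refine ⟨Quotient.out (Quotient.mk pairSetoid b), ?_, ?_⟩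
        · rw [List.mem_map]
          refine ⟨Quotient.mk pairSetoid b, ?_, rfl⟩
          rw [Finset.mem_toList]
          exact Finset.mem_erase.2 ⟨hxb, Finset.mem_image_of_mem _ hb⟩
        · exact pairEquiv_trans hqb (pairEquiv_symm (Quotient.mk_out b))
    · rw [gsat_bigOr_flat deltaF_list_flat]
      rintro q ⟨hqT, hq⟩
      have hgen : q ∈ RFin Var Val := mem_RFin.2 (hT q hqT)
      have hnb : q ∉ Bbar B := by
        intro hc
        unfold Bbar at hc
        rw [Finset.mem_filter] at hc
        exact hq hc.2
      refine ⟨deltaF q, List.mem_map.2 ⟨q, ?_, rfl⟩, ?_⟩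
      · rw [Finset.mem_toList, Finset.mem_sdiff]
        exact ⟨hgen, hnb⟩
      · rw [gsat_deltaF_pair (hT q hqT) (hT q hqT)]
        exact pairEquiv_refl q

lemma gsat_phiK {con : Var → Formula Var Val} (hcon : ConOK con) {K : Set (GCT Var Val)}
    (hK : ∀ T ∈ K, IsGCT T) (hne : K.Nonempty)
    (hdown : ∀ T ∈ K, ∀ S : GCT Var Val, S ⊆ T → S ∈ K)
    (hequiv : ∀ T S : GCT Var Val, IsGCT T → IsGCT S → T ∈ K → gctEquiv T S → S ∈ K)
    {T : GCT Var Val} (hT : IsGCT T) : T ∈ K ↔ gsat T (phiK con K) := by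
  have hBadne : ∀ B, BadB K B → B.Nonempty := by
    intro B hB
    rcases Finset.eq_empty_or_nonempty B with rfl | h
    · obtain ⟨T0, hT0⟩ := hne
      exact absurd (fun b hb => absurd hb (Finset.notMem_empty b)) (hB T0 hT0)
    · exact h
  unfold phiK
  rw [gsat_bigAnd]
  constructor
  · intro hTK φ hφ
    rw [List.mem_map] at hφ
    obtain ⟨B, hBmem, rfl⟩ := hφ
    rw [Finset.mem_toList, Finset.mem_filter, Finset.mem_powerset] at hBmem
    exact (gsat_phiB hcon (hBadne B hBmem.2) hT).2 (hBmem.2 T hTK)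
  · intro hsat
    by_contra hTK
    set B0 : Finset (Assign Var Val × FuncSystem Var Val) :=
      (RFin Var Val).filter (fun b => Realizes T b) with hB0
    have hBad : BadB K B0 := by
      intro T' hT' hall
      apply hTK
      set T'' : GCT Var Val := {q ∈ T' | ∃ b ∈ B0, pairEquiv q b} with hT''def
      have hT''K : T'' ∈ K := hdown T' hT' T'' (Set.sep_subset _ _)
      have hgT' : IsGCT T' := hK T' hT'
      have hgT'' : IsGCT T'' := hgT'.mono (Set.sep_subset _ _)
      have hEq : gctEquiv T'' T := by
        intro F
        ext a
        simp only [Set.mem_setOf_eq]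
        constructor
        · rintro ⟨G, ⟨haT', b, hb, hab⟩, hGF⟩
          rw [hB0, Finset.mem_filter] at hb
          obtain ⟨⟨a1, G1⟩, hqT, hqb⟩ := hb.2
          have hq' : pairEquiv (a1, G1) (a, G) := pairEquiv_trans hqb (pairEquiv_symm hab)
          have ha1 : a1 = a := hq'.1
          subst ha1
          exact ⟨G1, hqT, sysEquiv_trans hq'.2 hGF⟩
        · rintro ⟨G, haT, hGF⟩
          have hgen : (a, G) ∈ RFin Var Val := mem_RFin.2 (hT _ haT)
          have hb0mem : (a, G) ∈ B0 := by
            rw [hB0, Finset.mem_filter]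
            exact ⟨hgen, (a, G), haT, pairEquiv_refl _⟩
          obtain ⟨⟨a', G'⟩, hq'T', hq'b⟩ := hall _ hb0mem
          have ha' : a' = a := hq'b.1
          rw [ha'] at hq'T' hq'b
          exact ⟨G', ⟨hq'T', (a, G), hb0mem, hq'b⟩, sysEquiv_trans hq'b.2 hGF⟩
      exact hequiv T'' T hgT'' hT hT''K hEq
    have hB0mem : B0 ∈ (RFin Var Val).powerset.filter (BadB K) := by
      rw [Finset.mem_filter, Finset.mem_powerset]
      exact ⟨Finset.filter_subset _ _, hBad⟩
    have hx := hsat (phiB con B0) (List.mem_map.2 ⟨B0, Finset.mem_toList.2 hB0mem, rfl⟩)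
    rw [gsat_phiB hcon (hBadne B0 hBad) hT] at hx
    apply hx
    intro b hb
    rw [hB0, Finset.mem_filter] at hb
    exact hb.2

lemma isCO_falsum : IsCO (falsum : Formula Var Val) := ⟨trivial, trivial⟩

section Syn
variable (P : Formula Var Val → Prop)
  (Peq : ∀ (V : Var) (v : Val V), P (.eq V v))
  (Pand : ∀ φ ψ, P φ → P ψ → P (.and φ ψ))
  (Por : ∀ φ ψ, P φ → P ψ → P (.or φ ψ))
  (Pneg : ∀ φ, IsCO φ → P (.neg φ))
  (Pcf : ∀ (X : Finset Var) (x : Assign Var Val) (φ : Formula Var Val), P φ → P (.cf X x φ))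

include Peq Pand Pneg in
lemma syn_falsum : P (falsum : Formula Var Val) := by
  have h := Pand (.eq (Classical.arbitrary Var) (Classical.arbitrary _))
    (.neg (.eq (Classical.arbitrary Var) (Classical.arbitrary _)))
    (Peq _ _) (Pneg _ trivial)
  exact h

include Peq Pand Pneg in
lemma syn_bigAnd : ∀ {l : List (Formula Var Val)}, (∀ φ ∈ l, P φ) → P (bigAnd l) := by
  intro l
  induction l with
  | nil => intro _; exact Pneg falsum isCO_falsum
  | cons φ l ih =>
    intro h
    cases l with
    | nil => exact h φ (List.mem_singleton.2 rfl)
    | cons ψ l' =>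
      exact Pand _ _ (h φ (List.mem_cons_self))
        (ih (fun χ hχ => h χ (List.mem_cons_of_mem _ hχ)))

include Peq Pand Por Pneg in
lemma syn_bigOr : ∀ {l : List (Formula Var Val)}, (∀ φ ∈ l, P φ) → P (bigOr l) := by
  intro l
  induction l with
  | nil => intro _; exact syn_falsum P Peq Pand Pneg
  | cons φ l ih =>
    intro h
    cases l with
    | nil => exact h φ (List.mem_singleton.2 rfl)
    | cons ψ l' =>
      exact Por _ _ (h φ (List.mem_cons_self))
        (ih (fun χ hχ => h χ (List.mem_cons_of_mem _ hχ)))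

include Peq Pand Pneg Pcf in
lemma syn_deltaF (c : Assign Var Val × FuncSystem Var Val) : P (deltaF c) := by
  refine Pand _ _ ?_ ?_
  · refine syn_bigAnd P Peq Pand Pneg ?_
    intro φ hφ
    rw [List.mem_map] at hφ
    obtain ⟨V, _, rfl⟩ := hφ
    exact Peq _ _
  · refine syn_bigAnd P Peq Pand Pneg ?_
    intro φ hφ
    rw [List.mem_map] at hφ
    obtain ⟨V, _, rfl⟩ := hφ
    refine syn_bigAnd P Peq Pand Pneg ?_
    intro ψ hψ
    rw [List.mem_map] at hψ
    obtain ⟨w, _, rfl⟩ := hψ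
    exact Pcf _ _ _ (Peq _ _)

include Peq Pand Pneg Pcf in
lemma syn_chiGen (con : Var → Formula Var Val) (Pcon : ∀ V, P (con V)) :
    P (chiGen con) := by
  refine Pand _ _ ?_ ?_
  · refine syn_bigAnd P Peq Pand Pneg ?_
    intro φ hφ
    rw [List.mem_map] at hφ
    obtain ⟨V, _, rfl⟩ := hφ
    refine syn_bigAnd P Peq Pand Pneg ?_
    intro ψ hψ
    rw [List.mem_map] at hψ
    obtain ⟨w, _, rfl⟩ := hψ
    exact Pcf _ _ _ (Pcon V)
  · refine syn_bigAnd P Peq Pand Pneg ?_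
    intro φ hφ
    rw [List.mem_map] at hφ
    obtain ⟨V, _, rfl⟩ := hφ
    exact Pcon V

include Peq Pand Por Pneg Pcf in
lemma syn_phiK (con : Var → Formula Var Val) (Pcon : ∀ V, P (con V))
    (K : Set (GCT Var Val)) : P (phiK con K) := by
  refine syn_bigAnd P Peq Pand Pneg ?_
  intro φ hφ
  rw [List.mem_map] at hφ
  obtain ⟨B, _, rfl⟩ := hφ
  refine Por _ _ ?_ ?_
  · refine syn_bigOr P Peq Pand Por Pneg ?_
    intro φ hφ
    rw [List.mem_replicate] at hφ
    rw [hφ.2]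
    exact syn_chiGen P Peq Pand Pneg Pcf con Pcon
  · refine syn_bigOr P Peq Pand Por Pneg ?_
    intro φ hφ
    rw [List.mem_map] at hφ
    obtain ⟨c, _, rfl⟩ := hφ
    exact syn_deltaF P Peq Pand Pneg Pcf c

end Syn

lemma isCOD_phiK (con : Var → Formula Var Val) (hcon : ∀ V, IsCOD (con V))
    (K : Set (GCT Var Val)) : IsCOD (phiK con K) :=
  syn_phiK IsCOD (fun _ _ => trivial) (fun _ _ h1 h2 => ⟨h1, h2⟩)
    (fun _ _ h1 h2 => ⟨h1, h2⟩) (fun _ h => h) (fun _ _ _ h => h) con hcon K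

lemma isCOglobal_phiK (con : Var → Formula Var Val) (hcon : ∀ V, IsCOglobal (con V))
    (K : Set (GCT Var Val)) : IsCOglobal (phiK con K) :=
  syn_phiK IsCOglobal (fun _ _ => trivial) (fun _ _ h1 h2 => ⟨h1, h2⟩)
    (fun _ _ h1 h2 => ⟨h1, h2⟩) (fun _ h => h) (fun _ _ _ h => h) con hcon K

lemma conOK_conAtom : ConOK (fun V => (conAtom V : Formula Var Val)) := by
  intro U V
  constructor
  · intro h p hp q hq
    exact h p hp q hq (fun W hW => absurd hW (List.not_mem_nil (a := W)))
  · intro h p hp q hq _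
    exact h p hp q hq

noncomputable def conAtomG (V : Var) : Formula Var Val :=
  bigGor (((Finset.univ : Finset (Val V)).toList).map (Formula.eq V))

lemma isCOglobal_bigGor : ∀ {l : List (Formula Var Val)},
    (∀ φ ∈ l, IsCOglobal φ) → IsCOglobal (bigGor l) := by
  intro l
  induction l with
  | nil => intro _; exact ⟨trivial, trivial⟩
  | cons φ l ih =>
    intro h
    cases l with
    | nil => exact h φ (List.mem_singleton.2 rfl)
    | cons ψ l' =>
      exact ⟨h φ (List.mem_cons_self), ih (fun χ hχ => h χ (List.mem_cons_of_mem _ hχ))⟩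

lemma isCOglobal_conAtomG (V : Var) : IsCOglobal (conAtomG V : Formula Var Val) := by
  refine isCOglobal_bigGor ?_
  intro φ hφ
  rw [List.mem_map] at hφ
  obtain ⟨v, _, rfl⟩ := hφ
  trivial

lemma conOK_conAtomG : ConOK (conAtomG : Var → Formula Var Val) := by
  intro U V
  have hnil : (((Finset.univ : Finset (Val V)).toList).map (Formula.eq V)) ≠ [] := by
    simp [List.map_eq_nil_iff, Finset.toList_eq_nil]
    exact Finset.univ_nonempty.ne_empty
  unfold conAtomG
  rw [gsat_bigGor hnil]
  constructor
  · rintro ⟨φ, hφ, hsat⟩ p hp q hq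
    rw [List.mem_map] at hφ
    obtain ⟨v, _, rfl⟩ := hφ
    rw [(hsat p hp : p.1 V = v), (hsat q hq : q.1 V = v)]
  · intro h
    rcases Set.eq_empty_or_nonempty U with rfl | ⟨p0, hp0⟩
    · refine ⟨Formula.eq V (Classical.arbitrary _), List.mem_map.2 ⟨_, by simp, rfl⟩, ?_⟩
      intro p hp
      exact (Set.notMem_empty p hp).elim
    · exact ⟨Formula.eq V (p0.1 V), List.mem_map.2 ⟨_, by simp, rfl⟩,
        fun q hq => h q hq p0 hp0⟩
end Construction

/-- expressive completeness of COD (equivalently CO_⤘) over generalized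
causal teams: a nonempty class of generalized causal teams is definable by a COD-formula
(equivalently by a CO_⤘-formula) iff it is causally downward closed and closed under
equivalence ≈. -/
theorem cod_expressive_completeness {Var : Type} [Fintype Var] [DecidableEq Var] [Nonempty Var]
    {Val : Var → Type} [∀ V, Fintype (Val V)] [∀ V, Nonempty (Val V)]
    (K : Set (GCT Var Val)) (hK : ∀ T ∈ K, IsGCT T) (hne : K.Nonempty) :
    ((∃ φ : Formula Var Val, IsCOD φ ∧
        ∀ T : GCT Var Val, IsGCT T → (T ∈ K ↔ gsat T φ)) ↔
      ((∀ T ∈ K, ∀ S : GCT Var Val, S ⊆ T → S ∈ K) ∧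
       (∀ T S : GCT Var Val, IsGCT T → IsGCT S → T ∈ K → gctEquiv T S → S ∈ K))) ∧
    ((∃ φ : Formula Var Val, IsCOglobal φ ∧
        ∀ T : GCT Var Val, IsGCT T → (T ∈ K ↔ gsat T φ)) ↔
      ((∀ T ∈ K, ∀ S : GCT Var Val, S ⊆ T → S ∈ K) ∧
       (∀ T S : GCT Var Val, IsGCT T → IsGCT S → T ∈ K → gctEquiv T S → S ∈ K))) := by
  constructor
  · constructor
    · rintro ⟨φ, _, hφ⟩
      exact closures_of_definable hK φ hφ
    · rintro ⟨hdown, hequiv⟩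
      exact ⟨phiK (fun V => conAtom V) K, isCOD_phiK (fun V => conAtom V) (fun V => trivial) K,
        fun T hT => gsat_phiK conOK_conAtom hK hne hdown hequiv hT⟩
  · constructor
    · rintro ⟨φ, _, hφ⟩
      exact closures_of_definable hK φ hφ
    · rintro ⟨hdown, hequiv⟩
      exact ⟨phiK conAtomG K, isCOglobal_phiK conAtomG isCOglobal_conAtomG K,
        fun T hT => gsat_phiK conOK_conAtomG hK hne hdown hequiv hT⟩

end CausalTeams
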